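/- arXiv:1401.2759 — 4 statements merged into one kernel-verified Lean document; each statement's English description precedes it below -/
import Mathlib

section
/- For 0 < q < 1, r ≥ 1, n ≥ 0, and real x, the higher-order q-Euler polynomials satisfy E_{n,q}^{(r)}(x) = Σ_{l=0}^{n} C(n,l) q^{l x} E_{l,q}^{(r)} · [x]_q^{n-l}, where E_{l,q}^{(r)} = E_{l,q}^{(r)}(0). -/
noncomputable def qNum (q x : ℝ) : ℝ := (1 - q ^ x) / (1 - q)

/-- Closed form of the higher-order `q`-Euler polynomial. -/
noncomputable def qEuler (q : ℝ) (r n : ℕ) (x : ℝ) : ℝ :=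
  (1 / (1 - q)) ^ n *
    ∑ l ∈ Finset.range (n + 1),
      (n.choose l : ℝ) * (-1) ^ l * q ^ ((l : ℝ) * x) * (2 / (1 + q ^ l)) ^ r

/-- Vandermonde-type key lemma. -/
lemma key_sum (n j : ℕ) (Q : ℝ) :
    ∑ l ∈ Finset.range (n + 1),
      (n.choose l : ℝ) * (l.choose j : ℝ) * Q ^ l * (1 - Q) ^ (n - l)
      = (n.choose j : ℝ) * Q ^ j := by
  by_cases hj : j ≤ n
  · -- drop terms with l < j
    have hz : ∀ l ∈ Finset.range (n + 1), l ∉ Finset.Ico j (n + 1) →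
        (n.choose l : ℝ) * (l.choose j : ℝ) * Q ^ l * (1 - Q) ^ (n - l) = 0 := by
      intro l hl hl'
      simp only [Finset.mem_range] at hl
      simp only [Finset.mem_Ico, not_and, not_lt] at hl'
      have : l < j := by
        by_contra h
        exact absurd hl (not_lt.mpr (hl' (le_of_not_gt h)))
      rw [Nat.choose_eq_zero_of_lt this]
      ring
    have hsub : Finset.Ico j (n + 1) ⊆ Finset.range (n + 1) := by
      intro l hl
      simp only [Finset.mem_Ico] at hl
      exact Finset.mem_range.mpr hl.2
    rw [← Finset.sum_subset hsub (by intro l hl hl'; exact hz l hl hl')]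
    rw [Finset.sum_Ico_eq_sum_range]
    have hrw : ∀ i ∈ Finset.range (n + 1 - j),
        (n.choose (j + i) : ℝ) * ((j + i).choose j : ℝ) * Q ^ (j + i) * (1 - Q) ^ (n - (j + i))
        = (n.choose j : ℝ) * Q ^ j *
            (((n - j).choose i : ℝ) * Q ^ i * (1 - Q) ^ (n - j - i)) := by
      intro i hi
      simp only [Finset.mem_range] at hi
      have hji : j + i ≤ n := by omega
      have := Nat.choose_mul (n := n) (k := j + i) (s := j) (Nat.le_add_right _ _)
      rw [Nat.add_sub_cancel_left] at this
      have hcast : (n.choose (j + i) : ℝ) * ((j + i).choose j : ℝ)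
          = (n.choose j : ℝ) * ((n - j).choose i : ℝ) := by
        exact_mod_cast congrArg (Nat.cast (R := ℝ)) this
      rw [pow_add, show n - (j + i) = n - j - i by omega]
      calc (n.choose (j + i) : ℝ) * ((j + i).choose j : ℝ) * (Q ^ j * Q ^ i) * (1 - Q) ^ (n - j - i)
          = ((n.choose (j + i) : ℝ) * ((j + i).choose j : ℝ)) * (Q ^ j * Q ^ i) * (1 - Q) ^ (n - j - i) := by ring
        _ = ((n.choose j : ℝ) * ((n - j).choose i : ℝ)) * (Q ^ j * Q ^ i) * (1 - Q) ^ (n - j - i) := by rw [hcast]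
        _ = (n.choose j : ℝ) * Q ^ j * (((n - j).choose i : ℝ) * Q ^ i * (1 - Q) ^ (n - j - i)) := by ring
    rw [Finset.sum_congr rfl hrw, ← Finset.mul_sum]
    have hbin : ∑ i ∈ Finset.range (n - j + 1),
        ((n - j).choose i : ℝ) * Q ^ i * (1 - Q) ^ (n - j - i) = 1 := by
      have h1 : ∑ i ∈ Finset.range (n - j + 1),
          ((n - j).choose i : ℝ) * Q ^ i * (1 - Q) ^ (n - j - i)
          = ∑ i ∈ Finset.range (n - j + 1),
            Q ^ i * (1 - Q) ^ (n - j - i) * ((n - j).choose i : ℝ) :=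
        Finset.sum_congr rfl fun i _ => by ring
      rw [h1, ← add_pow]
      simp
    rw [show n + 1 - j = (n - j) + 1 by omega, hbin, mul_one]
  · -- j > n : both sides zero
    push_neg at hj
    rw [Nat.choose_eq_zero_of_lt hj]
    rw [Finset.sum_eq_zero]
    · ring
    intro l hl
    simp only [Finset.mem_range] at hl
    rw [Nat.choose_eq_zero_of_lt (by omega : l < j)]
    ring

theorem qEuler_expansion (q : ℝ) (hq0 : 0 < q) (hq1 : q < 1)
    (r : ℕ) (hr : 1 ≤ r) (n : ℕ) (x : ℝ) :
    qEuler q r n x =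
      ∑ l ∈ Finset.range (n + 1),
        (n.choose l : ℝ) * q ^ ((l : ℝ) * x) * qEuler q r l 0 * qNum q x ^ (n - l) := by
  set Q : ℝ := q ^ x with hQ
  set c : ℝ := 1 / (1 - q) with hc
  set f : ℕ → ℝ := fun k => (2 / (1 + q ^ k)) ^ r with hf
  have hqpow : ∀ l : ℕ, q ^ ((l : ℝ) * x) = Q ^ l := by
    intro l
    rw [mul_comm, Real.rpow_mul hq0.le, hQ, ← Real.rpow_natCast (q ^ x) l]
  have hqE0 : ∀ l : ℕ, qEuler q r l 0 =
      c ^ l * ∑ j ∈ Finset.range (l + 1), (l.choose j : ℝ) * (-1) ^ j * f j := by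
    intro l
    unfold qEuler
    rw [hc, hf]
    congr 1
    refine Finset.sum_congr rfl fun j _ => ?_
    rw [mul_zero, Real.rpow_zero, mul_one]
  have hqN : qNum q x = (1 - Q) * c := by
    rw [qNum, hQ, hc]; ring
  -- rewrite RHS
  have hRHS : ∑ l ∈ Finset.range (n + 1),
        (n.choose l : ℝ) * q ^ ((l : ℝ) * x) * qEuler q r l 0 * qNum q x ^ (n - l)
      = c ^ n * ∑ l ∈ Finset.range (n + 1), ∑ j ∈ Finset.range (n + 1),
          (-1) ^ j * f j * ((n.choose l : ℝ) * (l.choose j : ℝ) * Q ^ l * (1 - Q) ^ (n - l)) := by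
    rw [Finset.mul_sum]
    refine Finset.sum_congr rfl fun l hl => ?_
    simp only [Finset.mem_range] at hl
    have hln : l ≤ n := by omega
    rw [hqpow, hqE0, hqN, mul_pow]
    -- extend inner sum from range (l+1) to range (n+1)
    have hext : ∑ j ∈ Finset.range (l + 1), (l.choose j : ℝ) * (-1) ^ j * f j
        = ∑ j ∈ Finset.range (n + 1), (l.choose j : ℝ) * (-1) ^ j * f j := by
      refine Finset.sum_subset ?_ ?_
      · intro j hj; simp only [Finset.mem_range] at *; omega
      · intro j _ hj
        simp only [Finset.mem_range, not_lt] at hj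
        rw [Nat.choose_eq_zero_of_lt (by omega)]
        ring
    have hcpow : c ^ n = c ^ l * c ^ (n - l) := by
      rw [← pow_add]; congr 1; omega
    rw [hext, hcpow]
    simp only [Finset.mul_sum, Finset.sum_mul]
    exact Finset.sum_congr rfl fun j _ => by ring
  rw [hRHS, Finset.sum_comm]
  have hinner : ∀ j ∈ Finset.range (n + 1),
      (∑ l ∈ Finset.range (n + 1),
        (-1) ^ j * f j * ((n.choose l : ℝ) * (l.choose j : ℝ) * Q ^ l * (1 - Q) ^ (n - l)))
      = (-1) ^ j * f j * ((n.choose j : ℝ) * Q ^ j) := fun j _ => by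
    rw [← Finset.mul_sum, key_sum]
  rw [Finset.sum_congr rfl hinner]
  unfold qEuler
  rw [← hc]
  congr 1
  refine Finset.sum_congr rfl fun j _ => ?_
  simp only [hf]
  rw [hqpow]
  ring
end

section
/- Let 0 < q < 1, r ≥ 1, n ≥ 0, and let w₁, w₂ be odd positive integers. Then [w₁]_q^n · Σ_{j₁,…,j_r = 0}^{w₁ - 1} (-1)^{j₁+⋯+j_r} E_{n, q^{w₁}}^{(r)}( w₂ x + (w₂/w₁)(j₁+⋯+j_r) ) = [w₂]_q^n · Σ_{j₁,…,j_r = 0}^{w₂ - 1} (-1)^{j₁+⋯+j_r} E_{n, q^{w₂}}^{(r)}( w₁ x + (w₁/w₂)(j₁+⋯+j_r) ). -/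
open Finset in
lemma qE_geom_aux (a : ℝ) (ha : 0 < a) (w : ℕ) (hw : Odd w) :
    ∑ j ∈ Finset.range w, (-a) ^ j = (1 + a ^ w) / (1 + a) := by
  have h1 : (-a : ℝ) ≠ 1 := by linarith
  rw [geom_sum_eq h1, hw.neg_pow]
  rw [div_eq_div_iff (by intro h; apply h1; linarith) (by positivity)]
  ring

open Finset in
lemma qE_key (q : ℝ) (hq0 : 0 < q) (hq1 : q < 1) (r n : ℕ)
    (w₁ w₂ : ℕ) (hw₁ : Odd w₁) (hw₁0 : 0 < w₁) (hw₂0 : 0 < w₂) (x : ℝ) :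
    qNum q (w₁ : ℝ) ^ n *
        ∑ j ∈ Fintype.piFinset fun _ : Fin r => Finset.range w₁,
          (-1 : ℝ) ^ (∑ l, j l) *
            qEuler (q ^ w₁) r n ((w₂ : ℝ) * x + ((w₂ : ℝ) / w₁) * ∑ l, (j l : ℝ)) =
    (1 / (1 - q)) ^ n * ∑ l ∈ Finset.range (n + 1),
      (n.choose l : ℝ) * (-1) ^ l * q ^ ((w₁ : ℝ) * (w₂ : ℝ) * (l : ℝ) * x) *
      (2 * (1 + q ^ (w₁ * w₂ * l)) / ((1 + q ^ (w₁ * l)) * (1 + q ^ (w₂ * l)))) ^ r := by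
  have hw₁R : (w₁ : ℝ) ≠ 0 := Nat.cast_ne_zero.mpr hw₁0.ne'
  have hqw : q ^ w₁ < 1 := pow_lt_one₀ hq0.le hq1 hw₁0.ne'
  have h1 : (1 : ℝ) - q ^ w₁ ≠ 0 := by linarith
  have hq1' : (1 : ℝ) - q ≠ 0 := by linarith
  set P := Fintype.piFinset fun _ : Fin r => Finset.range w₁ with hP
  set f : ℕ → (Fin r → ℕ) → ℝ := fun l j =>
    (n.choose l : ℝ) * (-1) ^ l *
      (q ^ w₁) ^ ((l : ℝ) * ((w₂ : ℝ) * x + ((w₂ : ℝ) / w₁) * ∑ i, (j i : ℝ))) *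
      (2 / (1 + (q ^ w₁) ^ l)) ^ r with hf
  have hterm : ∀ l : ℕ, ∀ j : Fin r → ℕ,
      (-1 : ℝ) ^ (∑ i, j i) * f l j
      = ((n.choose l : ℝ) * (-1) ^ l * q ^ ((w₁ : ℝ) * (w₂ : ℝ) * (l : ℝ) * x) *
          (2 / (1 + q ^ (w₁ * l))) ^ r) * ∏ i : Fin r, (-(q ^ (w₂ * l))) ^ (j i) := by
    intro l j
    have hc : ((∑ i, (j i : ℝ))) = ((∑ i, j i : ℕ) : ℝ) := by push_cast; ring
    set m : ℕ := ∑ i, j i with hm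
    have e1 : (q ^ w₁ : ℝ) ^ ((l : ℝ) * ((w₂ : ℝ) * x + ((w₂ : ℝ) / w₁) * ∑ i, (j i : ℝ)))
        = q ^ ((w₁ : ℝ) * (w₂ : ℝ) * (l : ℝ) * x) * q ^ (w₂ * l * m) := by
      rw [hc]
      rw [← Real.rpow_natCast q w₁, ← Real.rpow_natCast q (w₂ * l * m),
        ← Real.rpow_mul hq0.le, ← Real.rpow_add hq0]
      congr 1
      push_cast
      field_simp
    have e2 : (-1 : ℝ) ^ m * q ^ (w₂ * l * m) = (-(q ^ (w₂ * l))) ^ m := by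
      rw [pow_mul q (w₂ * l) m]
      exact (neg_pow _ m).symm
    have e3 : ((-(q ^ (w₂ * l))) : ℝ) ^ m = ∏ i : Fin r, (-(q ^ (w₂ * l))) ^ (j i) := by
      rw [hm, ← Finset.prod_pow_eq_pow_sum]
    simp only [hf, e1, pow_mul q w₁ l]
    rw [← e3, ← e2]
    ring
  -- per-l evaluation of the j-sum
  have hlsum : ∀ l : ℕ,
      (∑ j ∈ P, (-1 : ℝ) ^ (∑ i, j i) * f l j)
      = (n.choose l : ℝ) * (-1) ^ l * q ^ ((w₁ : ℝ) * (w₂ : ℝ) * (l : ℝ) * x) *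
        (2 * (1 + q ^ (w₁ * w₂ * l)) / ((1 + q ^ (w₁ * l)) * (1 + q ^ (w₂ * l)))) ^ r := by
    intro l
    have ha : (0:ℝ) < q ^ (w₂ * l) := pow_pos hq0 _
    calc (∑ j ∈ P, (-1 : ℝ) ^ (∑ i, j i) * f l j)
        = ∑ j ∈ P, ((n.choose l : ℝ) * (-1) ^ l * q ^ ((w₁ : ℝ) * (w₂ : ℝ) * (l : ℝ) * x) *
            (2 / (1 + q ^ (w₁ * l))) ^ r) * ∏ i : Fin r, (-(q ^ (w₂ * l))) ^ (j i) := by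
          exact Finset.sum_congr rfl fun j _ => hterm l j
      _ = ((n.choose l : ℝ) * (-1) ^ l * q ^ ((w₁ : ℝ) * (w₂ : ℝ) * (l : ℝ) * x) *
            (2 / (1 + q ^ (w₁ * l))) ^ r) *
            ∑ j ∈ P, ∏ i : Fin r, (-(q ^ (w₂ * l))) ^ (j i) := by
          rw [← Finset.mul_sum]
      _ = ((n.choose l : ℝ) * (-1) ^ l * q ^ ((w₁ : ℝ) * (w₂ : ℝ) * (l : ℝ) * x) *
            (2 / (1 + q ^ (w₁ * l))) ^ r) *
            ((1 + (q ^ (w₂ * l)) ^ w₁) / (1 + q ^ (w₂ * l))) ^ r := by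
          rw [hP, ← Finset.prod_univ_sum]
          rw [Finset.prod_const]
          rw [qE_geom_aux _ ha w₁ hw₁]
          simp
      _ = _ := by
          have hb : (1 + q ^ (w₁ * l) : ℝ) ≠ 0 := by positivity
          have hd : (1 + q ^ (w₂ * l) : ℝ) ≠ 0 := by positivity
          have hbase : (2 / (1 + q ^ (w₁ * l))) *
              ((1 + (q ^ (w₂ * l)) ^ w₁) / (1 + q ^ (w₂ * l)))
              = 2 * (1 + q ^ (w₁ * w₂ * l)) / ((1 + q ^ (w₁ * l)) * (1 + q ^ (w₂ * l))) := by
            rw [← pow_mul, show w₂ * l * w₁ = w₁ * w₂ * l from by ring]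
            field_simp
          rw [mul_assoc, ← mul_pow, hbase]
  -- main chain
  simp only [qEuler, qNum, Real.rpow_natCast]
  calc ((1 - q ^ w₁) / (1 - q)) ^ n *
        ∑ j ∈ P, (-1 : ℝ) ^ (∑ i, j i) *
          ((1 / (1 - q ^ w₁)) ^ n * ∑ l ∈ Finset.range (n + 1), f l j)
      = ((1 - q ^ w₁) / (1 - q)) ^ n * ((1 / (1 - q ^ w₁)) ^ n *
          ∑ j ∈ P, ∑ l ∈ Finset.range (n + 1), (-1 : ℝ) ^ (∑ i, j i) * f l j) := by
        congr 1
        rw [Finset.mul_sum]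
        refine Finset.sum_congr rfl fun j _ => ?_
        rw [Finset.mul_sum, Finset.mul_sum, Finset.mul_sum]
        exact Finset.sum_congr rfl fun l _ => by ring
    _ = (1 / (1 - q)) ^ n *
          ∑ l ∈ Finset.range (n + 1), ∑ j ∈ P, (-1 : ℝ) ^ (∑ i, j i) * f l j := by
        rw [Finset.sum_comm, ← mul_assoc, ← mul_pow]
        congr 2
        field_simp
    _ = _ := by
        congr 1
        exact Finset.sum_congr rfl fun l _ => hlsum l

theorem qEuler_symmetry (q : ℝ) (hq0 : 0 < q) (hq1 : q < 1)
    (r : ℕ) (hr : 1 ≤ r) (n : ℕ) (w₁ w₂ : ℕ) (hw₁ : Odd w₁) (hw₂ : Odd w₂)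
    (hw₁0 : 0 < w₁) (hw₂0 : 0 < w₂) (x : ℝ) :
    qNum q (w₁ : ℝ) ^ n *
        ∑ j ∈ Fintype.piFinset fun _ : Fin r => Finset.range w₁,
          (-1 : ℝ) ^ (∑ l, j l) *
            qEuler (q ^ w₁) r n ((w₂ : ℝ) * x + ((w₂ : ℝ) / w₁) * ∑ l, (j l : ℝ)) =
      qNum q (w₂ : ℝ) ^ n *
        ∑ j ∈ Fintype.piFinset fun _ : Fin r => Finset.range w₂,
          (-1 : ℝ) ^ (∑ l, j l) *
            qEuler (q ^ w₂) r n ((w₁ : ℝ) * x + ((w₁ : ℝ) / w₂) * ∑ l, (j l : ℝ)) := by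
  rw [qE_key q hq0 hq1 r n w₁ w₂ hw₁ hw₁0 hw₂0 x,
    qE_key q hq0 hq1 r n w₂ w₁ hw₂ hw₂0 hw₁0 x]
  congr 1
  refine Finset.sum_congr rfl fun l _ => ?_
  rw [mul_comm (w₂ : ℝ) (w₁ : ℝ), Nat.mul_comm w₂ w₁,
    mul_comm (1 + q ^ (w₂ * l)) (1 + q ^ (w₁ * l))]
end

section
/- Let 0 < q < 1, r ≥ 1, n ≥ 0, and let w₁, w₂ be odd positive integers. Define the q-analogue of alternating power sums T_{n,i,q}^{(r)}(w) = Σ_{j₁,…,j_r=0}^{w-1} (-1)^{j₁+⋯+j_r} q^{(n-i)(j₁+⋯+j_r)} [j₁+⋯+j_r]_q^{i}. Then Σ_{i=0}^{n} C(n,i) [w₁]_q^{n-i} [w₂]_q^{i} T_{n,i,q^{w₂}}^{(r)}(w₁) E_{n-i, q^{w₁}}^{(r)}(w₂ x) = Σ_{i=0}^{n} C(n,i) [w₁]_q^{i} [w₂]_q^{n-i} T_{n,i,q^{w₁}}^{(r)}(w₂) E_{n-i, q^{w₂}}^{(r)}(w₁ x). -/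
open Finset

/-- The `q`-analogue of higher-order alternating power sums. -/
noncomputable def T (q : ℝ) (r n i w : ℕ) : ℝ :=
  ∑ j ∈ Fintype.piFinset fun _ : Fin r => Finset.range w,
    (-1 : ℝ) ^ (∑ l, j l) * q ^ ((n - i) * ∑ l, j l) * qNum q ((∑ l, j l : ℕ) : ℝ) ^ i

lemma choose_collapse (u : ℝ) (n l : ℕ) (hl : l ≤ n) :
    ∑ i ∈ range (n+1), (n.choose i : ℝ) * ((n-i).choose l : ℝ) * (1-u)^i * u^(n-i)
      = (n.choose l : ℝ) * u^l := by
  rw [← Finset.sum_range_add_sum_Ico _ (Nat.add_le_add_right (Nat.sub_le n l) 1)]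
  have h2 : ∑ i ∈ Finset.Ico (n-l+1) (n+1), (n.choose i : ℝ) * ((n-i).choose l : ℝ) * (1-u)^i * u^(n-i) = 0 := by
    apply Finset.sum_eq_zero
    intro i hi
    simp only [Finset.mem_Ico] at hi
    have : (n-i).choose l = 0 := Nat.choose_eq_zero_of_lt (by omega)
    simp [this]
  rw [h2, add_zero]
  have h1 : ∀ i ∈ range (n-l+1), (n.choose i : ℝ) * ((n-i).choose l : ℝ) * (1-u)^i * u^(n-i)
      = (n.choose l : ℝ) * u^l * ((1-u)^i * u^((n-l)-i) * ((n-l).choose i : ℝ)) := by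
    intro i hi
    simp only [Finset.mem_range] at hi
    have hin : i ≤ n := by omega
    have hc : n.choose i * (n-i).choose l = n.choose l * (n-l).choose i := by
      have h3 := Nat.choose_mul (n := n) (by omega : l ≤ n - i)
      rw [Nat.choose_symm hin] at h3
      rw [h3]
      congr 1
      rw [show n - i - l = (n - l) - i by omega, Nat.choose_symm (by omega)]
    have hc' : (n.choose i : ℝ) * ((n-i).choose l : ℝ) = (n.choose l : ℝ) * ((n-l).choose i : ℝ) := by
      exact_mod_cast hc
    have hu : u^(n-i) = u^l * u^((n-l)-i) := by
      rw [← pow_add]; congr 1; omega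
    rw [hu]
    linear_combination ((1-u)^i * (u^l * u^((n-l)-i))) * hc'
  rw [Finset.sum_congr rfl h1, ← Finset.mul_sum, ← add_pow (1-u) u (n-l)]
  simp

lemma odd_geom (Q:ℝ) (w:ℕ) (hw : Odd w) :
    (1+Q) * ∑ t ∈ range w, (-Q)^t = 1 + Q^w := by
  have := geom_sum_mul (-Q) w
  have hne : (-Q)^w = -(Q^w) := Odd.neg_pow hw Q
  rw [hne] at this
  linear_combination -this

lemma odd_pow_expand (Q:ℝ) (hQ : 0 < Q) (w:ℕ) (hw : Odd w) (r:ℕ) :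
    (2/(1+Q))^r = (2/(1+Q^w))^r *
      ∑ k ∈ Fintype.piFinset (fun _ : Fin r => range w),
        (-1:ℝ)^(∑ t, k t) * Q^(∑ t, k t) := by
  have h1 : (0:ℝ) < 1 + Q := by linarith
  have h2 : (0:ℝ) < 1 + Q^w := by positivity
  have key : 2/(1+Q) = (2/(1+Q^w)) * ∑ t ∈ range w, (-Q)^t := by
    have h3 := odd_geom Q w hw
    field_simp
    linear_combination (-1:ℝ) * h3
  rw [key, mul_pow]
  congr 1
  have hp : (∑ t ∈ range w, (-Q)^t) ^ r = ∏ _i : Fin r, (∑ t ∈ range w, (-Q)^t) := by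
    simp [Finset.prod_const]
  rw [hp, Finset.prod_univ_sum]
  apply Finset.sum_congr rfl
  intro k _
  rw [Finset.prod_pow_eq_pow_sum, neg_pow]

noncomputable def S (q : ℝ) (r n w₁ w₂ : ℕ) (x : ℝ) : ℝ :=
  (1/(1-q))^n * ∑ l ∈ range (n+1),
    (n.choose l : ℝ) * (-1)^l * (2/(1+q^(w₁*w₂*l)))^r * q ^ (((w₁*w₂*l : ℕ) : ℝ) * x) *
      ∑ j ∈ Fintype.piFinset (fun _ : Fin r => range w₁),
        ∑ k ∈ Fintype.piFinset (fun _ : Fin r => range w₂),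
          (-1:ℝ)^((∑ t, j t) + ∑ t, k t) * q^(l*(w₂*∑ t, j t) + l*(w₁*∑ t, k t))

lemma key (q : ℝ) (hq0 : 0 < q) (hq1 : q < 1) (r n w₁ w₂ : ℕ)
    (hw₁0 : 0 < w₁) (hw₂0 : 0 < w₂) (hw₂ : Odd w₂) (x : ℝ) :
    ∑ i ∈ Finset.range (n + 1),
        (n.choose i : ℝ) * qNum q (w₁ : ℝ) ^ (n - i) * qNum q (w₂ : ℝ) ^ i *
          T (q ^ w₂) r n i w₁ * qEuler (q ^ w₁) r (n - i) ((w₂ : ℝ) * x)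
      = S q r n w₁ w₂ x := by
  have hq' : (1:ℝ) - q ≠ 0 := by linarith
  have hw1q : (1:ℝ) - q^w₁ ≠ 0 := by
    have := pow_lt_one₀ hq0.le hq1 (by omega : w₁ ≠ 0); linarith
  have hw2q : (1:ℝ) - q^w₂ ≠ 0 := by
    have := pow_lt_one₀ hq0.le hq1 (by omega : w₂ ≠ 0); linarith
  set G : ℕ → (Fin r → ℕ) → ℕ → ℝ := fun i j l =>
    ((1/(1-q))^n * (-1)^(∑ t, j t) * (-1)^l * q ^ (((w₁*w₂*l : ℕ) : ℝ) * x)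
        * (2/(1+q^(w₁*l)))^r) *
      ((n.choose i : ℝ) * ((n-i).choose l : ℝ) * (1-q^(w₂*∑ t, j t))^i
        * (q^(w₂*∑ t, j t))^(n-i)) with hG
  have step1 : ∀ i ∈ range (n+1),
      (n.choose i : ℝ) * qNum q (w₁ : ℝ) ^ (n - i) * qNum q (w₂ : ℝ) ^ i *
          T (q ^ w₂) r n i w₁ * qEuler (q ^ w₁) r (n - i) ((w₂ : ℝ) * x)
        = ∑ l ∈ range (n+1), ∑ j ∈ Fintype.piFinset (fun _ : Fin r => range w₁), G i j l := by
    intro i hi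
    simp only [Finset.mem_range] at hi
    have hi' : i ≤ n := by omega
    have pad : qEuler (q^w₁) r (n-i) ((w₂:ℝ)*x)
        = (1/(1-q^w₁))^(n-i) * ∑ l ∈ range (n+1),
            (((n-i).choose l : ℝ) * (-1)^l * (q^w₁) ^ ((l:ℝ)*((w₂:ℝ)*x)) * (2/(1+(q^w₁)^l))^r) := by
      rw [qEuler]
      congr 1
      rw [← Finset.sum_range_add_sum_Ico _ (show n-i+1 ≤ n+1 by omega)]
      have hz : ∑ l ∈ Finset.Ico (n-i+1) (n+1),
          (((n-i).choose l : ℝ) * (-1)^l * (q^w₁) ^ ((l:ℝ)*((w₂:ℝ)*x)) * (2/(1+(q^w₁)^l))^r) = 0 := by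
        apply Finset.sum_eq_zero
        intro l hl
        simp only [Finset.mem_Ico] at hl
        have : (n-i).choose l = 0 := Nat.choose_eq_zero_of_lt (by omega)
        simp [this]
      rw [hz, add_zero]
    rw [pad, T]
    simp only [Finset.sum_mul, Finset.mul_sum]
    apply Finset.sum_congr rfl
    intro l _
    apply Finset.sum_congr rfl
    intro j _
    have e0 : qNum q (w₁:ℝ) = (1 - q^w₁)/(1-q) := by
      rw [qNum, Real.rpow_natCast]
    have e0' : qNum q (w₂:ℝ) = (1 - q^w₂)/(1-q) := by
      rw [qNum, Real.rpow_natCast]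
    have e1 : qNum (q^w₂) ((∑ t, j t : ℕ) : ℝ) = (1 - q^(w₂*∑ t, j t))/(1-q^w₂) := by
      rw [qNum, Real.rpow_natCast, ← pow_mul]
    have e2 : ((q:ℝ)^w₁) ^ ((l:ℝ)*((w₂:ℝ)*x)) = q ^ (((w₁*w₂*l : ℕ):ℝ) * x) := by
      rw [← Real.rpow_natCast q w₁, ← Real.rpow_mul hq0.le]
      congr 1
      push_cast
      ring
    have e3 : ((q:ℝ)^w₂)^(∑ t, (n-i) * j t) = (q^(w₂*∑ t, j t))^(n-i) := by
      rw [← Finset.mul_sum, ← pow_mul, ← pow_mul]; congr 1; ring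
    have e4 : ((q:ℝ)^w₁)^l = q^(w₁*l) := (pow_mul q w₁ l).symm
    have hD : (1/(1-q):ℝ)^n = (1/(1-q))^(n-i) * (1/(1-q))^i := by
      rw [← pow_add]; congr 1; omega
    rw [e0, e0', e1, e2, e3, e4, hG]
    simp only []
    rw [hD]
    simp only [div_pow, one_div_pow]
    field_simp
    ring
  rw [Finset.sum_congr rfl step1]
  rw [Finset.sum_comm]
  rw [show (∑ l ∈ range (n+1), ∑ i ∈ range (n+1),
        ∑ j ∈ Fintype.piFinset (fun _ : Fin r => range w₁), G i j l)
      = ∑ l ∈ range (n+1), ∑ j ∈ Fintype.piFinset (fun _ : Fin r => range w₁),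
        ∑ i ∈ range (n+1), G i j l from
    Finset.sum_congr rfl (fun l _ => Finset.sum_comm)]
  have step2 : ∀ l ∈ range (n+1), ∀ j ∈ Fintype.piFinset (fun _ : Fin r => range w₁),
      ∑ i ∈ range (n+1), G i j l
        = ((1/(1-q))^n * (n.choose l : ℝ) * (-1)^l * (2/(1+q^(w₁*l)))^r
            * q ^ (((w₁*w₂*l : ℕ) : ℝ) * x))
          * ((-1:ℝ)^(∑ t, j t) * q^(l*(w₂*∑ t, j t))) := by
    intro l hl j _
    simp only [Finset.mem_range] at hl
    rw [hG]
    simp only []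
    rw [← Finset.mul_sum, choose_collapse _ n l (by omega)]
    ring
  rw [Finset.sum_congr rfl (fun l hl => Finset.sum_congr rfl (step2 l hl))]
  rw [S, Finset.mul_sum (range (n+1)) _ ((1/(1-q))^n)]
  apply Finset.sum_congr rfl
  intro l hl
  have hQ : (0:ℝ) < q^(w₁*l) := pow_pos hq0 _
  have expand := odd_pow_expand (q^(w₁*l)) hQ w₂ hw₂ r
  have eb : ((q:ℝ)^(w₁*l))^w₂ = q^(w₁*w₂*l) := by rw [← pow_mul]; congr 1; ring
  rw [eb] at expand
  have expand2 : (2/(1+q^(w₁*l)))^r = (2/(1+q^(w₁*w₂*l)))^r *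
      ∑ k ∈ Fintype.piFinset (fun _ : Fin r => range w₂),
        (-1:ℝ)^(∑ t, k t) * q^(l*(w₁*∑ t, k t)) := by
    rw [expand]
    congr 1
    apply Finset.sum_congr rfl
    intro k _
    congr 1
    rw [← pow_mul]
    congr 1
    ring
  have hj : ∀ j ∈ Fintype.piFinset (fun _ : Fin r => range w₁),
      ((1/(1-q))^n * (n.choose l : ℝ) * (-1)^l * (2/(1+q^(w₁*l)))^r
          * q ^ (((w₁*w₂*l : ℕ) : ℝ) * x))
        * ((-1:ℝ)^(∑ t, j t) * q^(l*(w₂*∑ t, j t)))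
      = ∑ k ∈ Fintype.piFinset (fun _ : Fin r => range w₂),
          ((1/(1-q))^n * ((n.choose l : ℝ) * (-1)^l * (2/(1+q^(w₁*w₂*l)))^r
              * q ^ (((w₁*w₂*l : ℕ) : ℝ) * x)))
            * ((-1:ℝ)^((∑ t, j t) + ∑ t, k t) * q^(l*(w₂*∑ t, j t) + l*(w₁*∑ t, k t))) := by
    intro j _
    calc ((1/(1-q))^n * (n.choose l : ℝ) * (-1)^l * (2/(1+q^(w₁*l)))^r
          * q ^ (((w₁*w₂*l : ℕ) : ℝ) * x))
        * ((-1:ℝ)^(∑ t, j t) * q^(l*(w₂*∑ t, j t)))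
        = ((1/(1-q))^n * ((n.choose l : ℝ) * (-1)^l * (2/(1+q^(w₁*w₂*l)))^r
              * q ^ (((w₁*w₂*l : ℕ) : ℝ) * x))
            * ((-1:ℝ)^(∑ t, j t) * q^(l*(w₂*∑ t, j t))))
          * ∑ k ∈ Fintype.piFinset (fun _ : Fin r => range w₂),
              (-1:ℝ)^(∑ t, k t) * q^(l*(w₁*∑ t, k t)) := by
          rw [expand2]; ring
      _ = ∑ k ∈ Fintype.piFinset (fun _ : Fin r => range w₂),
            ((1/(1-q))^n * ((n.choose l : ℝ) * (-1)^l * (2/(1+q^(w₁*w₂*l)))^r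
                * q ^ (((w₁*w₂*l : ℕ) : ℝ) * x))
              * ((-1:ℝ)^(∑ t, j t) * q^(l*(w₂*∑ t, j t))))
            * ((-1:ℝ)^(∑ t, k t) * q^(l*(w₁*∑ t, k t))) :=
        Finset.mul_sum _ _ _
      _ = _ := Finset.sum_congr rfl (fun k _ => by ring)
  rw [Finset.sum_congr rfl hj]
  rw [show (∑ j ∈ Fintype.piFinset (fun _ : Fin r => range w₁),
        ∑ k ∈ Fintype.piFinset (fun _ : Fin r => range w₂),
          ((1/(1-q))^n * ((n.choose l : ℝ) * (-1)^l * (2/(1+q^(w₁*w₂*l)))^r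
              * q ^ (((w₁*w₂*l : ℕ) : ℝ) * x)))
            * ((-1:ℝ)^((∑ t, j t) + ∑ t, k t) * q^(l*(w₂*∑ t, j t) + l*(w₁*∑ t, k t))))
      = ((1/(1-q))^n * ((n.choose l : ℝ) * (-1)^l * (2/(1+q^(w₁*w₂*l)))^r
              * q ^ (((w₁*w₂*l : ℕ) : ℝ) * x)))
          * ∑ j ∈ Fintype.piFinset (fun _ : Fin r => range w₁),
            ∑ k ∈ Fintype.piFinset (fun _ : Fin r => range w₂),
              (-1:ℝ)^((∑ t, j t) + ∑ t, k t) * q^(l*(w₂*∑ t, j t) + l*(w₁*∑ t, k t)) from by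
    rw [Finset.mul_sum]
    exact Finset.sum_congr rfl (fun j _ => (Finset.mul_sum _ _ _).symm)]
  ring

lemma S_symm (q : ℝ) (r n w₁ w₂ : ℕ) (x : ℝ) :
    S q r n w₁ w₂ x = S q r n w₂ w₁ x := by
  rw [S, S]
  congr 1
  apply Finset.sum_congr rfl
  intro l _
  have hm : w₂*w₁*l = w₁*w₂*l := by ring
  rw [hm]
  congr 1
  rw [Finset.sum_comm]
  apply Finset.sum_congr rfl
  intro k _
  apply Finset.sum_congr rfl
  intro j _
  ring

theorem qEuler_T_symmetry (q : ℝ) (hq0 : 0 < q) (hq1 : q < 1)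
    (r : ℕ) (hr : 1 ≤ r) (n : ℕ) (w₁ w₂ : ℕ) (hw₁ : Odd w₁) (hw₂ : Odd w₂)
    (hw₁0 : 0 < w₁) (hw₂0 : 0 < w₂) (x : ℝ) :
    ∑ i ∈ Finset.range (n + 1),
        (n.choose i : ℝ) * qNum q (w₁ : ℝ) ^ (n - i) * qNum q (w₂ : ℝ) ^ i *
          T (q ^ w₂) r n i w₁ * qEuler (q ^ w₁) r (n - i) ((w₂ : ℝ) * x) =
      ∑ i ∈ Finset.range (n + 1),
        (n.choose i : ℝ) * qNum q (w₁ : ℝ) ^ i * qNum q (w₂ : ℝ) ^ (n - i) *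
          T (q ^ w₁) r n i w₂ * qEuler (q ^ w₂) r (n - i) ((w₁ : ℝ) * x) := by
  rw [key q hq0 hq1 r n w₁ w₂ hw₁0 hw₂0 hw₂ x, S_symm]
  rw [← key q hq0 hq1 r n w₂ w₁ hw₂0 hw₁0 hw₁ x]
  apply Finset.sum_congr rfl
  intro i _
  ring
end

section
/- For 0 < q < 1, r ≥ 1, n ≥ 0, odd positive integers w₁, w₂, integers j₁,…,j_r with 0 ≤ j_l < w₁, and real x, the following 'splitting' identity holds: [w₁]_q^n · E_{n, q^{w₁}}^{(r)}( w₂ x + (w₂/w₁) Σ_{l=1}^r j_l ) = Σ_{i=0}^{n} C(n,i) [w₂]_q^{i} [w₁]_q^{n-i} [Σ_{l=1}^r j_l]_{q^{w₂}}^{i} · q^{w₂ (n-i) Σ_{l=1}^r j_l} · E_{n-i, q^{w₁}}^{(r)}(w₂ x). -/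
lemma choose_swap {n i l : ℕ} (h : i + l ≤ n) :
    n.choose i * (n - i).choose l = n.choose l * (n - l).choose i := by
  have h1 : n - l ≤ n := Nat.sub_le _ _
  have h2 : i ≤ n - l := by omega
  have := Nat.choose_mul (n := n) h2
  rw [Nat.choose_symm (by omega : l ≤ n)] at this
  rw [this]
  congr 1
  have : n - l - i = n - i - l := by omega
  rw [this, Nat.choose_symm (by omega : l ≤ n - i)]

lemma key_s6 (n : ℕ) (A : ℝ) (B : ℕ → ℝ) :
    ∑ i ∈ Finset.range (n + 1), (n.choose i : ℝ) * (1 - A) ^ i * A ^ (n - i) *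
      ∑ l ∈ Finset.range (n - i + 1), ((n - i).choose l : ℝ) * (-1) ^ l * B l
    = ∑ l ∈ Finset.range (n + 1), (n.choose l : ℝ) * (-1) ^ l * A ^ l * B l := by
  have step1 : ∀ i ∈ Finset.range (n + 1),
      (n.choose i : ℝ) * (1 - A) ^ i * A ^ (n - i) *
        ∑ l ∈ Finset.range (n - i + 1), ((n - i).choose l : ℝ) * (-1) ^ l * B l
      = ∑ l ∈ Finset.range (n + 1),
          (n.choose i : ℝ) * ((n - i).choose l : ℝ) * (1 - A) ^ i * A ^ (n - i) *
            (-1) ^ l * B l := by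
    intro i hi
    rw [Finset.mul_sum]
    rw [Finset.sum_subset (show Finset.range (n-i+1) ⊆ Finset.range (n+1) from Finset.range_subset_range.2 (by omega))]
    · apply Finset.sum_congr rfl; intro l hl; ring
    · intro l hl hnl
      simp only [Finset.mem_range] at hl hnl
      rw [Nat.choose_eq_zero_of_lt (show n - i < l by omega)]
      simp
  rw [Finset.sum_congr rfl step1, Finset.sum_comm]
  apply Finset.sum_congr rfl
  intro l hl
  simp only [Finset.mem_range] at hl
  have hln : l ≤ n := by omega
  rw [show ∀ S : ℕ → ℝ, (∑ i ∈ Finset.range (n+1), S i) =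
      ∑ i ∈ Finset.range (n - l + 1), S i + ∑ i ∈ Finset.Ico (n - l + 1) (n + 1), S i from
    fun S => (Finset.sum_range_add_sum_Ico S (by omega)).symm]
  have hzero : ∑ i ∈ Finset.Ico (n - l + 1) (n + 1),
      (n.choose i : ℝ) * ((n - i).choose l : ℝ) * (1 - A) ^ i * A ^ (n - i) * (-1) ^ l * B l
      = 0 := by
    apply Finset.sum_eq_zero
    intro i hi
    simp only [Finset.mem_Ico] at hi
    rw [Nat.choose_eq_zero_of_lt (by omega : n - i < l)]
    simp
  rw [hzero, add_zero]
  have : ∀ i ∈ Finset.range (n - l + 1),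
      (n.choose i : ℝ) * ((n - i).choose l : ℝ) * (1 - A) ^ i * A ^ (n - i) * (-1) ^ l * B l
      = (n.choose l : ℝ) * (-1) ^ l * A ^ l * B l *
        (((n - l).choose i : ℝ) * (1 - A) ^ i * A ^ (n - l - i)) := by
    intro i hi
    simp only [Finset.mem_range] at hi
    have hc : (n.choose i : ℝ) * ((n - i).choose l : ℝ)
        = (n.choose l : ℝ) * ((n - l).choose i : ℝ) := by
      exact_mod_cast congrArg (Nat.cast (R := ℝ)) (choose_swap (by omega : i + l ≤ n))
    have hA : A ^ (n - i) = A ^ l * A ^ (n - l - i) := by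
      rw [← pow_add]; congr 1; omega
    rw [hc, hA]; ring
  rw [Finset.sum_congr rfl this, ← Finset.mul_sum]
  have hbin : ∑ i ∈ Finset.range (n - l + 1),
      ((n - l).choose i : ℝ) * (1 - A) ^ i * A ^ (n - l - i) = 1 := by
    calc ∑ i ∈ Finset.range (n - l + 1),
          ((n - l).choose i : ℝ) * (1 - A) ^ i * A ^ (n - l - i)
        = ∑ i ∈ Finset.range (n - l + 1),
          (1 - A) ^ i * A ^ (n - l - i) * ((n - l).choose i : ℝ) := by
          apply Finset.sum_congr rfl; intro i hi; ring
      _ = ((1 - A) + A) ^ (n - l) := (add_pow (1 - A) A (n - l)).symm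
      _ = 1 := by norm_num
  rw [hbin, mul_one]

theorem qEuler_splitting (q : ℝ) (hq0 : 0 < q) (hq1 : q < 1)
    (r : ℕ) (hr : 1 ≤ r) (n : ℕ) (w₁ w₂ : ℕ) (hw₁ : Odd w₁) (hw₂ : Odd w₂)
    (hw₁0 : 0 < w₁) (hw₂0 : 0 < w₂) (j : Fin r → ℕ) (hj : ∀ l, j l < w₁) (x : ℝ) :
    qNum q (w₁ : ℝ) ^ n *
        qEuler (q ^ w₁) r n ((w₂ : ℝ) * x + ((w₂ : ℝ) / w₁) * ∑ l, (j l : ℝ)) =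
      ∑ i ∈ Finset.range (n + 1),
        (n.choose i : ℝ) * qNum q (w₂ : ℝ) ^ i * qNum q (w₁ : ℝ) ^ (n - i) *
          qNum (q ^ w₂) ((∑ l, j l : ℕ) : ℝ) ^ i *
          q ^ ((w₂ * (n - i) * ∑ l, j l : ℕ)) *
          qEuler (q ^ w₁) r (n - i) ((w₂ : ℝ) * x) := by
  have hq0' : (0:ℝ) ≤ q := le_of_lt hq0
  have hqne : 1 - q ≠ 0 := by nlinarith
  have hQlt : q ^ w₁ < 1 := pow_lt_one₀ hq0' hq1 (by omega)
  have hQne : 1 - q ^ w₁ ≠ 0 := by nlinarith [pow_pos hq0 w₁]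
  have hW2lt : q ^ w₂ < 1 := pow_lt_one₀ hq0' hq1 (by omega)
  have hW2ne : 1 - q ^ w₂ ≠ 0 := by nlinarith [pow_pos hq0 w₂]
  set S : ℕ := ∑ l, j l with hS
  have hScast : ((S : ℕ) : ℝ) = ∑ l, (j l : ℝ) := by push_cast [hS]; rfl
  set A : ℝ := q ^ (w₂ * S) with hA
  set B : ℕ → ℝ := fun l => q ^ ((l : ℝ) * ((w₁:ℝ) * ((w₂:ℝ) * x))) * (2 / (1 + (q ^ w₁) ^ l)) ^ r
    with hB
  -- rpow of q^w₁ base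
  have hbase : ∀ z : ℝ, (q ^ w₁ : ℝ) ^ z = q ^ ((w₁ : ℝ) * z) := by
    intro z
    rw [← Real.rpow_natCast q w₁, ← Real.rpow_mul hq0']
  have hqNum1 : qNum q (w₁ : ℝ) = (1 - q ^ w₁) / (1 - q) := by
    rw [qNum, Real.rpow_natCast]
  have hqNum2 : qNum q (w₂ : ℝ) = (1 - q ^ w₂) / (1 - q) := by
    rw [qNum, Real.rpow_natCast]
  have hqNumS : qNum (q ^ w₂) ((S : ℕ) : ℝ) = (1 - A) / (1 - q ^ w₂) := by
    rw [qNum, Real.rpow_natCast, hA, pow_mul]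
  -- LHS
  have hLHS : qNum q (w₁ : ℝ) ^ n *
      qEuler (q ^ w₁) r n ((w₂ : ℝ) * x + ((w₂ : ℝ) / w₁) * ∑ l, (j l : ℝ))
      = (1 / (1 - q)) ^ n *
        ∑ l ∈ Finset.range (n + 1), (n.choose l : ℝ) * (-1) ^ l * A ^ l * B l := by
    rw [qEuler, hqNum1, ← mul_assoc, ← mul_pow]
    have hcoef : (1 - q ^ w₁) / (1 - q) * (1 / (1 - q ^ w₁)) = 1 / (1 - q) := by
      field_simp
    rw [hcoef]
    congr 1
    apply Finset.sum_congr rfl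
    intro l hl
    have hw₁ne : (w₁ : ℝ) ≠ 0 := Nat.cast_ne_zero.2 (by omega)
    have hexp : (w₁ : ℝ) * ((l : ℝ) * ((w₂ : ℝ) * x + ((w₂ : ℝ) / w₁) * ∑ i, (j i : ℝ)))
        = (l : ℝ) * ((w₁:ℝ) * ((w₂:ℝ) * x)) + ((l * (w₂ * S) : ℕ) : ℝ) := by
      push_cast [← hScast]
      field_simp
    rw [hbase, hexp, Real.rpow_add hq0, Real.rpow_natCast, pow_mul, hB]
    ring
  rw [hLHS, ← key_s6 n A B, Finset.mul_sum]
  apply Finset.sum_congr rfl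
  intro i hi
  simp only [Finset.mem_range] at hi
  have hin : i ≤ n := by omega
  rw [qEuler, hqNum1, hqNum2, hqNumS]
  have hpow : q ^ (w₂ * (n - i) * S) = A ^ (n - i) := by
    rw [hA, ← pow_mul]; congr 1; ring
  have hinner : ∀ l ∈ Finset.range (n - i + 1),
      ((n - i).choose l : ℝ) * (-1) ^ l * (q ^ w₁) ^ ((l : ℝ) * ((w₂:ℝ) * x)) *
        (2 / (1 + (q ^ w₁) ^ l)) ^ r
      = ((n - i).choose l : ℝ) * (-1) ^ l * B l := by
    intro l hl
    rw [hbase, hB]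
    ring_nf
  rw [Finset.sum_congr rfl hinner, hpow]
  have hsplit : (1 / (1 - q)) ^ n = (1 / (1 - q)) ^ i * (1 / (1 - q)) ^ (n - i) := by
    rw [← pow_add]; congr 1; omega
  have hfrac : ((1 - q ^ w₁) / (1 - q)) ^ (n - i) * (1 / (1 - q ^ w₁)) ^ (n - i)
      = (1 / (1 - q)) ^ (n - i) := by
    rw [← mul_pow]; congr 1; field_simp
  have hfrac2 : ((1 - q ^ w₂) / (1 - q)) ^ i * ((1 - A) / (1 - q ^ w₂)) ^ i
      = (1 - A) ^ i * (1 / (1 - q)) ^ i := by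
    rw [← mul_pow, ← mul_pow]; congr 1; field_simp
  calc (1 / (1 - q)) ^ n * ((n.choose i : ℝ) * (1 - A) ^ i * A ^ (n - i) *
        ∑ l ∈ Finset.range (n - i + 1), ((n - i).choose l : ℝ) * (-1) ^ l * B l)
      = (n.choose i : ℝ) * (((1 - q ^ w₂) / (1 - q)) ^ i * ((1 - A) / (1 - q ^ w₂)) ^ i) *
        (((1 - q ^ w₁) / (1 - q)) ^ (n - i) * (1 / (1 - q ^ w₁)) ^ (n - i)) * A ^ (n - i) *
        (∑ l ∈ Finset.range (n - i + 1), ((n - i).choose l : ℝ) * (-1) ^ l * B l) := by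
        rw [hfrac, hfrac2, hsplit]; ring
    _ = _ := by ring
end
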